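/- There exists a real constant C₂ > 0 such that for all real x ≥ 1, |∑_{1 ≤ k ≤ x} 1/φ(k) − C₁·log x| < C₂, where C₁ = ζ(2)ζ(3)/ζ(6). In particular, since C₁ < 2, there exists a real X such that for all x ≥ X, ∑_{1 ≤ k ≤ x} 1/φ(k) < 2·log x. -/

import Mathlib

open ArithmeticFunction Finset
open scoped ArithmeticFunction.zeta



noncomputable def cc (n : ℕ) : ℝ := ((moebius n : ℤ) : ℝ)^2 / ((n : ℝ) * (n.totient : ℝ))

lemma cc_nonneg (n : ℕ) : 0 ≤ cc n := by
  unfold cc; positivity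

lemma cc_zero : cc 0 = 0 := by simp [cc]

lemma cc_one : cc 1 = 1 := by simp [cc]

lemma cc_not_squarefree {n : ℕ} (h : ¬ Squarefree n) : cc n = 0 := by
  simp [cc, moebius_eq_zero_of_not_squarefree h]

lemma cc_of_squarefree {n : ℕ} (h : Squarefree n) :
    cc n = 1 / ((n : ℝ) * (n.totient : ℝ)) := by
  unfold cc
  have : (moebius n : ℤ)^2 = 1 := moebius_sq_eq_one_of_squarefree h
  rw [show (((moebius n : ℤ)):ℝ)^2 = (((moebius n : ℤ)^2 : ℤ) : ℝ) by push_cast; ring, this]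
  norm_num

lemma cc_mul {m n : ℕ} (h : Nat.Coprime m n) : cc (m * n) = cc m * cc n := by
  unfold cc
  rw [isMultiplicative_moebius.map_mul_of_coprime h, Nat.totient_mul h]
  push_cast
  ring


lemma totient_sq_bound {n : ℕ} (h : Squarefree n) : n ≤ 2 * n.totient ^ 2 := by
  have hn0 : n ≠ 0 := h.ne_zero
  have hprod : ∏ p ∈ n.primeFactors, p = n := Nat.prod_primeFactors_of_squarefree h
  have htot : n.totient = ∏ p ∈ n.primeFactors, (p - 1) := by
    rw [Nat.totient_eq_prod_factorization hn0]
    rw [Nat.prod_factorization_eq_prod_primeFactors]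
    refine Finset.prod_congr rfl fun p hp => ?_
    have h1 : n.factorization p = 1 := by
      have hle := (Nat.squarefree_iff_factorization_le_one hn0).mp h p
      have hge : 0 < n.factorization p :=
        Nat.Prime.factorization_pos_of_dvd (Nat.prime_of_mem_primeFactors hp) hn0
          (Nat.dvd_of_mem_primeFactors hp)
      omega
    rw [h1]
    simp
  conv_lhs => rw [← hprod]
  rw [htot, ← Finset.prod_pow]
  have key : ∀ s : Finset ℕ, (∀ p ∈ s, p.Prime) → ∏ p ∈ s, p ≤ 2 * ∏ p ∈ s, (p-1)^2 := by
    intro s hs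
    by_cases h2 : 2 ∈ s
    · rw [← Finset.mul_prod_erase s _ h2, ← Finset.mul_prod_erase s _ h2]
      have : ∏ p ∈ s.erase 2, p ≤ ∏ p ∈ s.erase 2, (p-1)^2 := by
        refine Finset.prod_le_prod' fun p hp => ?_
        have hp3 : 3 ≤ p := by
          have := (hs p (Finset.mem_of_mem_erase hp)).two_le
          have := Finset.ne_of_mem_erase hp
          omega
        have hq : p - 1 + 1 = p := by omega
        nlinarith [sq_nonneg (p-1), hq]
      calc 2 * ∏ p ∈ s.erase 2, p ≤ 2 * ∏ p ∈ s.erase 2, (p-1)^2 :=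
            Nat.mul_le_mul_left 2 this
        _ = 2 * ((2-1)^2 * ∏ p ∈ s.erase 2, (p-1)^2) := by norm_num
    · have : ∏ p ∈ s, p ≤ ∏ p ∈ s, (p-1)^2 := by
        refine Finset.prod_le_prod' fun p hp => ?_
        have hp3 : 3 ≤ p := by
          have h2' : p ≠ 2 := fun hh => h2 (hh ▸ hp)
          have := (hs p hp).two_le
          omega
        have hq : p - 1 + 1 = p := by omega
        nlinarith [sq_nonneg (p-1), hq]
      omega
  exact key n.primeFactors fun p hp => Nat.prime_of_mem_primeFactors hp



lemma cc_le (n : ℕ) : cc n ≤ 2 * ((n : ℝ) ^ (3/2 : ℝ))⁻¹ := by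
  rcases Nat.eq_zero_or_pos n with rfl | hn
  · simp [cc_zero, Real.zero_rpow (by norm_num : (3/2:ℝ) ≠ 0)]
  by_cases h : Squarefree n
  · have hn0 : (0:ℝ) < n := by exact_mod_cast hn
    have htp : (0:ℝ) < n.totient := by
      exact_mod_cast (Nat.totient_pos.mpr hn)
    have hsq : Real.sqrt n ≤ 2 * n.totient := by
      have h4 : (n:ℝ) ≤ (2 * n.totient)^2 := by
        have := totient_sq_bound h
        have : (n:ℝ) ≤ 2 * (n.totient:ℝ)^2 := by exact_mod_cast this
        nlinarith [sq_nonneg ((n.totient : ℝ))]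
      calc Real.sqrt n ≤ Real.sqrt ((2 * n.totient)^2) := Real.sqrt_le_sqrt h4
        _ = 2 * n.totient := Real.sqrt_sq (by positivity)
    have hrw : (n:ℝ) ^ (3/2 : ℝ) = n * Real.sqrt n := by
      rw [Real.sqrt_eq_rpow]
      nth_rewrite 1 [show (3/2 : ℝ) = 1 + 1/2 by norm_num]
      rw [Real.rpow_add hn0, Real.rpow_one]
    rw [cc_of_squarefree h, one_div, hrw]
    have hle : (n:ℝ) * Real.sqrt n ≤ 2 * ((n:ℝ) * n.totient) := by
      calc (n:ℝ) * Real.sqrt n ≤ (n:ℝ) * (2 * n.totient) := by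
            exact mul_le_mul_of_nonneg_left hsq hn0.le
        _ = 2 * ((n:ℝ) * n.totient) := by ring
    have hx : (0:ℝ) < (n:ℝ) * n.totient := by positivity
    have hy : (0:ℝ) < (n:ℝ) * Real.sqrt n := by positivity
    rw [inv_le_iff_one_le_mul₀ hx]
    have h2 : (0:ℝ) < ((n:ℝ) * Real.sqrt n)⁻¹ := by positivity
    calc (1:ℝ) = ((n:ℝ) * Real.sqrt n)⁻¹ * ((n:ℝ) * Real.sqrt n) := by
          field_simp
      _ ≤ ((n:ℝ) * Real.sqrt n)⁻¹ * (2 * ((n:ℝ) * n.totient)) := by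
          exact mul_le_mul_of_nonneg_left hle h2.le
      _ = 2 * ((n:ℝ) * Real.sqrt n)⁻¹ * ((n:ℝ) * n.totient) := by ring
  · have : (0:ℝ) ≤ 2 * ((n : ℝ) ^ (3/2 : ℝ))⁻¹ := by positivity
    rw [cc_not_squarefree h]; exact this

lemma summable_cc : Summable cc :=
  Summable.of_nonneg_of_le cc_nonneg cc_le
    ((Real.summable_nat_rpow_inv.mpr (by norm_num)).mul_left 2)

lemma cc_log_le (n : ℕ) : cc n * Real.log n ≤ 8 * ((n : ℝ) ^ (5/4 : ℝ))⁻¹ := by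
  rcases Nat.eq_zero_or_pos n with rfl | hn
  · simp [cc_zero]
  have hn0 : (0:ℝ) < n := by exact_mod_cast hn
  have hlog : Real.log n ≤ 4 * (n:ℝ) ^ (1/4 : ℝ) := by
    have := Real.log_natCast_le_rpow_div n (by norm_num : (0:ℝ) < 1/4)
    linarith [this]
  have h1 : cc n * Real.log n ≤ (2 * ((n : ℝ) ^ (3/2 : ℝ))⁻¹) * (4 * (n:ℝ) ^ (1/4 : ℝ)) := by
    apply mul_le_mul (cc_le n) hlog (Real.log_natCast_nonneg n) (by positivity)
  refine h1.trans (le_of_eq ?_)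
  rw [← Real.rpow_neg hn0.le, ← Real.rpow_neg hn0.le]
  rw [show (2:ℝ) * (n:ℝ)^(-(3/2:ℝ)) * (4 * (n:ℝ)^(1/4:ℝ))
      = 8 * ((n:ℝ)^(-(3/2:ℝ)) * (n:ℝ)^(1/4:ℝ)) by ring, ← Real.rpow_add hn0]
  norm_num
lemma cclog_nonneg (n : ℕ) : 0 ≤ cc n * Real.log n :=
  mul_nonneg (cc_nonneg n) (Real.log_natCast_nonneg n)

lemma summable_cc_log : Summable (fun n => cc n * Real.log n) :=
  Summable.of_nonneg_of_le cclog_nonneg cc_log_le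
    ((Real.summable_nat_rpow_inv.mpr (by norm_num)).mul_left 8)



noncomputable def gg : ArithmeticFunction ℝ :=
  ⟨fun n => ((moebius n : ℤ) : ℝ)^2 / (n.totient : ℝ), by simp⟩

noncomputable def GG : ArithmeticFunction ℝ :=
  ⟨fun n => (n : ℝ) / (n.totient : ℝ), by simp⟩

lemma gg_apply (n : ℕ) : gg n = ((moebius n : ℤ) : ℝ)^2 / (n.totient : ℝ) := rfl
lemma GG_apply (n : ℕ) : GG n = (n : ℝ) / (n.totient : ℝ) := rfl

lemma gg_mult : gg.IsMultiplicative := by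
  refine ⟨by simp [gg_apply], fun {m n} h => ?_⟩
  rw [gg_apply, gg_apply, gg_apply, isMultiplicative_moebius.map_mul_of_coprime h,
    Nat.totient_mul h]
  push_cast
  ring

lemma GG_mult : GG.IsMultiplicative := by
  refine ⟨by simp [GG_apply], fun {m n} h => ?_⟩
  rw [GG_apply, GG_apply, GG_apply, Nat.totient_mul h]
  push_cast
  ring

lemma GG_eq : GG = ↑ζ * gg := by
  rw [ArithmeticFunction.IsMultiplicative.eq_iff_eq_on_prime_powers GG GG_mult _
    (isMultiplicative_zeta.natCast.mul gg_mult)]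
  intro p i hp
  rw [coe_zeta_mul_apply, Nat.sum_divisors_prime_pow hp]
  rcases Nat.eq_zero_or_pos i with rfl | hi
  · simp [GG_apply, gg_apply]
  have hsub : ({0, 1} : Finset ℕ) ⊆ range (i + 1) := by
    intro x hx
    simp only [mem_insert, mem_singleton] at hx
    rcases hx with rfl | rfl <;> simp [mem_range] <;> omega
  rw [← Finset.sum_subset hsub (fun x hx hnx => ?_)]
  · -- sum over {0,1}
    have h01 : ({0,1} : Finset ℕ) = insert 0 {1} := rfl
    rw [h01, Finset.sum_insert (by simp), Finset.sum_singleton]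
    rw [pow_zero, pow_one, GG_apply, gg_apply, gg_apply]
    have hp1 : 1 ≤ p := hp.one_lt.le
    have htpp : p.totient = p - 1 := Nat.totient_prime hp
    have htot : (p^i).totient = p^(i-1) * (p - 1) := Nat.totient_prime_pow hp hi
    rw [htot, htpp, moebius_apply_prime hp]
    have hcast : ((p:ℝ) - 1) = ((p - 1 : ℕ) : ℝ) := by
      push_cast [hp.one_lt.le]; ring
    have hpm1 : (0:ℝ) < ((p - 1 : ℕ) : ℝ) := by
      have := hp.two_le; exact_mod_cast Nat.sub_pos_of_lt hp.one_lt
    have hppos : (0:ℝ) < (p:ℝ)^(i-1) := by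
      have := hp.pos; positivity
    have hpi : (p:ℕ)^i = p^(i-1) * p := by
      rw [← pow_succ]; congr 1; omega
    rw [hpi]
    have h3 : ((p:ℝ)^(i-1)) ≠ 0 := hppos.ne'
    have h1 : (p:ℝ) - 1 ≠ 0 := by
      have : (2:ℝ) ≤ (p:ℝ) := by exact_mod_cast hp.two_le
      nlinarith
    push_cast
    field_simp
    simp only [Nat.totient_one, ArithmeticFunction.moebius_apply_one, ← hcast]
    push_cast
    ring
  · -- vanishing terms: x ≥ 2
    have hx2 : 2 ≤ x := by
      simp only [mem_insert, mem_singleton] at hnx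
      omega
    rw [gg_apply, moebius_eq_zero_of_not_squarefree, Int.cast_zero]
    · norm_num
    · intro hsq
      have := hsq p (by
        have : p^2 ∣ p^x := pow_dvd_pow p hx2
        simpa [sq] using this)
      exact hp.one_lt.ne' (Nat.isUnit_iff.mp this)

lemma one_div_totient_eq {k : ℕ} (hk : k ≠ 0) :
    (1 : ℝ) / (k.totient : ℝ) = ∑ d ∈ k.divisors, cc d * (1 / ((k / d : ℕ) : ℝ)) := by
  have h := congrArg (fun f : ArithmeticFunction ℝ => f k) GG_eq
  simp only [GG_apply, coe_zeta_mul_apply] at h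
  have hk0 : (0:ℝ) < k := by exact_mod_cast Nat.pos_of_ne_zero hk
  have htk : (0:ℝ) < (k.totient : ℝ) := by exact_mod_cast Nat.totient_pos.mpr (Nat.pos_of_ne_zero hk)
  have h2 : (1 : ℝ) / (k.totient : ℝ) = (∑ d ∈ k.divisors, gg d) / k := by
    rw [← h]; field_simp
  rw [h2, Finset.sum_div]
  refine Finset.sum_congr rfl fun d hd => ?_
  obtain ⟨hdvd, -⟩ := Nat.mem_divisors.mp hd
  obtain ⟨m, rfl⟩ := hdvd
  have hd0 : d ≠ 0 := by rintro rfl; simp at hd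
  have hm0 : m ≠ 0 := by rintro rfl; simp at hk
  rw [Nat.mul_div_cancel_left m (Nat.pos_of_ne_zero hd0)]
  rw [gg_apply]
  unfold cc
  have hd0' : (0:ℝ) < d := by exact_mod_cast Nat.pos_of_ne_zero hd0
  have hm0' : (0:ℝ) < m := by exact_mod_cast Nat.pos_of_ne_zero hm0
  have htd : (0:ℝ) < (d.totient : ℝ) := by
    exact_mod_cast Nat.totient_pos.mpr (Nat.pos_of_ne_zero hd0)
  push_cast
  rw [div_div, div_mul_div_comm, mul_one]
  congr 1
  ring

lemma swap_sum (N : ℕ) (t : ℕ → ℕ → ℝ) :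
    ∑ k ∈ Icc 1 N, ∑ d ∈ k.divisors, t d (k / d)
      = ∑ d ∈ Icc 1 N, ∑ m ∈ Icc 1 (N / d), t d m := by
  have hrw : ∀ k ∈ Icc 1 N, ∑ d ∈ k.divisors, t d (k / d)
      = ∑ x ∈ k.divisorsAntidiagonal, t x.1 x.2 :=
    fun k _ => (Nat.sum_divisorsAntidiagonal t).symm
  rw [Finset.sum_congr rfl hrw, Finset.sum_sigma', Finset.sum_sigma']
  refine Finset.sum_nbij' (i := fun x => ⟨x.2.1, x.2.2⟩)
    (j := fun y => ⟨y.1 * y.2, (y.1, y.2)⟩) ?_ ?_ ?_ ?_ ?_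
  · rintro ⟨k, d, m⟩ hx
    simp only [Finset.mem_sigma, Finset.mem_Icc, Nat.mem_divisorsAntidiagonal] at hx ⊢
    obtain ⟨⟨hk1, hkN⟩, hdm, hk0⟩ := hx
    have hd0 : 0 < d := by
      rcases Nat.eq_zero_or_pos d with rfl | h; · simp at hdm; omega
      · exact h
    have hm0 : 0 < m := by
      rcases Nat.eq_zero_or_pos m with rfl | h; · simp at hdm; omega
      · exact h
    refine ⟨⟨hd0, ?_⟩, hm0, ?_⟩
    · calc d ≤ d * m := Nat.le_mul_of_pos_right d hm0
        _ = k := hdm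
        _ ≤ N := hkN
    · rw [Nat.le_div_iff_mul_le hd0, mul_comm]
      exact le_trans (le_of_eq hdm) hkN
  · rintro ⟨d, m⟩ hy
    simp only [Finset.mem_sigma, Finset.mem_Icc, Nat.mem_divisorsAntidiagonal] at hy ⊢
    obtain ⟨⟨hd1, hdN⟩, hm1, hmN⟩ := hy
    rw [Nat.le_div_iff_mul_le (by omega : 0 < d)] at hmN
    have hk1 : 0 < d * m := Nat.mul_pos (by omega) (by omega)
    refine ⟨⟨hk1, by rw [mul_comm]; exact hmN⟩, ?_⟩
    simp [hk1.ne']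
  · rintro ⟨k, d, m⟩ hx
    simp only [Finset.mem_sigma, Nat.mem_divisorsAntidiagonal] at hx
    obtain ⟨-, hdm, -⟩ := hx
    simp [hdm]
  · rintro ⟨d, m⟩ _; rfl
  · rintro ⟨k, d, m⟩ _; rfl




noncomputable def Aconst : ℝ := ∑' n, cc n

lemma pow_ne_one_of_prime (p : Nat.Primes) {k : ℕ} (hk : 1 ≤ k) :
    ((p : ℕ) : ℂ) ^ k ≠ 1 := by
  intro h
  have h2 : (((p:ℕ)^k : ℕ) : ℂ) = ((1:ℕ) : ℂ) := by push_cast; simpa using h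
  have h3 : (p:ℕ)^k = 1 := Nat.cast_injective h2
  have hp2 := p.2.two_le
  have := Nat.one_lt_pow (by omega : k ≠ 0) (by omega : 1 < (p:ℕ))
  omega

lemma ccC_local (p : Nat.Primes) :
    ∑' e : ℕ, ((cc ((p:ℕ)^e) : ℂ)) = 1 + (((p:ℕ):ℂ) * (((p:ℕ):ℂ) - 1))⁻¹ := by
  have hvanish : ∀ e : ℕ, e ∉ ({0, 1} : Finset ℕ) → ((cc ((p:ℕ)^e) : ℂ)) = 0 := by
    intro e he
    simp only [mem_insert, mem_singleton] at he
    have h2 : 2 ≤ e := by omega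
    have : ¬ Squarefree ((p:ℕ)^e) := by
      intro hsq
      have := hsq (p:ℕ) (by simpa [sq] using pow_dvd_pow (p:ℕ) h2)
      exact p.2.one_lt.ne' (Nat.isUnit_iff.mp this)
    simp [cc_not_squarefree this]
  rw [tsum_eq_sum hvanish]
  rw [show ({0,1} : Finset ℕ) = insert 0 {1} from rfl, Finset.sum_insert (by simp),
    Finset.sum_singleton]
  rw [pow_zero, pow_one, cc_one, cc_of_squarefree p.2.squarefree, Nat.totient_prime p.2]
  have h1 : (((p:ℕ) - 1 : ℕ) : ℝ) = ((p:ℕ):ℝ) - 1 := by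
    push_cast [p.2.one_lt.le]; ring
  rw [h1]
  push_cast
  ring

lemma zeta_term_eq (p : Nat.Primes) :
    (1 - ((p:ℕ):ℂ) ^ (-(6:ℂ)))⁻¹ * (1 + (((p:ℕ):ℂ) * (((p:ℕ):ℂ) - 1))⁻¹)
      = (1 - ((p:ℕ):ℂ) ^ (-(2:ℂ)))⁻¹ * (1 - ((p:ℕ):ℂ) ^ (-(3:ℂ)))⁻¹ := by
  have hconv : ∀ k : ℕ, ((p:ℕ):ℂ) ^ (-(k:ℂ)) = (((p:ℕ):ℂ) ^ k)⁻¹ := by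
    intro k
    rw [Complex.cpow_neg, Complex.cpow_natCast]
  have h2 := hconv 2
  have h3 := hconv 3
  have h6 := hconv 6
  push_cast at h2 h3 h6
  rw [h2, h3, h6]
  have hq0 : ((p:ℕ):ℂ) ≠ 0 := by
    exact_mod_cast Nat.cast_ne_zero.mpr p.2.pos.ne'
  have hq1 : ((p:ℕ):ℂ) - 1 ≠ 0 := by
    rw [sub_ne_zero]
    simpa using pow_ne_one_of_prime p le_rfl
  have hne : ∀ k : ℕ, 1 ≤ k → ((p:ℕ):ℂ)^k - 1 ≠ 0 := fun k hk =>
    sub_ne_zero.mpr (pow_ne_one_of_prime p hk)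
  have hne2 := hne 2 (by norm_num)
  have hne3 := hne 3 (by norm_num)
  have hne6 := hne 6 (by norm_num)
  set q : ℂ := ((p:ℕ):ℂ) with hq
  have e2 : 1 - (q^2)⁻¹ = (q^2 - 1)/q^2 := by field_simp
  have e3 : 1 - (q^3)⁻¹ = (q^3 - 1)/q^3 := by field_simp
  have e6 : 1 - (q^6)⁻¹ = (q^6 - 1)/q^6 := by field_simp
  have ep : 1 + (q*(q-1))⁻¹ = (q*(q-1) + 1)/(q*(q-1)) := by
    field_simp
  rw [e2, e3, e6, ep, inv_div, inv_div, inv_div]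
  rw [div_mul_div_comm, div_mul_div_comm]
  have d1 : q^6 - 1 ≠ 0 := hne6
  have d2 : q * (q - 1) ≠ 0 := mul_ne_zero hq0 hq1
  have d3 : q^2 - 1 ≠ 0 := hne2
  have d4 : q^3 - 1 ≠ 0 := hne3
  rw [div_eq_div_iff (mul_ne_zero d1 d2) (mul_ne_zero d3 d4)]
  ring

lemma hasProd_A : HasProd (fun p : Nat.Primes => ∑' e : ℕ, ((cc ((p:ℕ)^e) : ℂ)))
    ((Aconst : ℂ)) := by
  have hf1 : ((cc 1 : ℂ)) = 1 := by rw [cc_one]; norm_num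
  have hmul : ∀ {m n : ℕ}, Nat.Coprime m n →
      ((cc (m*n) : ℂ)) = ((cc m : ℂ)) * ((cc n : ℂ)) := by
    intro m n h
    rw [cc_mul h]; push_cast; ring
  have hsum : Summable (fun n => ‖((cc n : ℂ))‖) := by
    refine summable_cc.congr fun n => ?_
    rw [Complex.norm_real, Real.norm_eq_abs, abs_of_nonneg (cc_nonneg n)]
  have hf0 : ((cc 0 : ℂ)) = 0 := by rw [cc_zero]; norm_num
  have := EulerProduct.eulerProduct_hasProd hf1 hmul hsum hf0
  rwa [show ∑' n : ℕ, ((cc n : ℂ)) = ((Aconst : ℂ)) by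
    rw [Aconst, Complex.ofReal_tsum]] at this

lemma zeta6_mul_A : riemannZeta 6 * (Aconst : ℂ) = riemannZeta 2 * riemannZeta 3 := by
  have h2 : (1:ℝ) < (2:ℂ).re := by norm_num
  have h3 : (1:ℝ) < (3:ℂ).re := by norm_num
  have h6 : (1:ℝ) < (6:ℂ).re := by norm_num
  have hz2 := riemannZeta_eulerProduct_hasProd h2
  have hz3 := riemannZeta_eulerProduct_hasProd h3
  have hz6 := riemannZeta_eulerProduct_hasProd h6
  have hL := hz6.mul hasProd_A
  have hR := hz2.mul hz3
  have heq : (fun p : Nat.Primes => (1 - (p:ℂ) ^ (-(6:ℂ)))⁻¹ * ∑' e : ℕ, ((cc ((p:ℕ)^e) : ℂ)))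
      = fun p : Nat.Primes => (1 - (p:ℂ) ^ (-(2:ℂ)))⁻¹ * (1 - (p:ℂ) ^ (-(3:ℂ)))⁻¹ := by
    funext p
    rw [ccC_local p]
    exact zeta_term_eq p
  rw [heq] at hL
  exact hL.unique hR

lemma A_eq_zeta : ((Aconst : ℝ) : ℂ) = riemannZeta 2 * riemannZeta 3 / riemannZeta 6 := by
  have h6 : riemannZeta 6 ≠ 0 := riemannZeta_ne_zero_of_one_lt_re (by norm_num)
  rw [eq_div_iff h6]
  rw [mul_comm]
  exact zeta6_mul_A


noncomputable def zr (k : ℕ) : ℝ := ∑' n : ℕ, 1 / ((n+1 : ℕ) : ℝ)^k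

lemma summable_zr {k : ℕ} (hk : 2 ≤ k) : Summable (fun n : ℕ => 1 / ((n+1 : ℕ) : ℝ)^k) := by
  have := (Real.summable_one_div_nat_pow (p := k)).mpr hk
  have h2 := (summable_nat_add_iff (f := fun n : ℕ => 1 / (n : ℝ)^k) 1).mpr this
  exact h2.congr fun n => by norm_num

lemma zr_nonneg (k : ℕ) : 0 ≤ zr k := tsum_nonneg fun n => by positivity

lemma zeta_eq_zr {k : ℕ} (hk : 2 ≤ k) : riemannZeta (k:ℂ) = ((zr k : ℝ) : ℂ) := by
  rw [zeta_eq_tsum_one_div_nat_add_one_cpow (by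
    simp only [Complex.natCast_re]; exact_mod_cast (by omega : 1 < k))]
  rw [zr, Complex.ofReal_tsum]
  congr 1
  funext n
  rw [Complex.cpow_natCast]
  push_cast
  norm_num

lemma zr2_le : zr 2 ≤ 167/100 := by
  apply Real.tsum_le_of_sum_range_le (fun n => by positivity)
  intro M
  rcases le_or_gt M 5 with hM | hM
  · calc ∑ i ∈ Finset.range M, 1 / ((i+1 : ℕ) : ℝ)^2
        ≤ ∑ i ∈ Finset.range 5, 1 / ((i+1 : ℕ) : ℝ)^2 :=
          Finset.sum_le_sum_of_subset_of_nonneg (Finset.range_subset_range.mpr hM)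
            (fun i _ _ => by positivity)
      _ ≤ 167/100 := by norm_num [Finset.sum_range_succ]
  · have key : ∀ M : ℕ, 5 ≤ M → ∑ i ∈ Finset.range M, 1 / ((i+1 : ℕ) : ℝ)^2
        ≤ 167/100 - 1/(M:ℝ) := by
      intro M hM
      induction M, hM using Nat.le_induction with
      | base => norm_num [Finset.sum_range_succ]
      | succ m hm ih =>
        rw [Finset.sum_range_succ]
        have hm' : (5:ℝ) ≤ (m:ℝ) := by exact_mod_cast hm
        have step : 1 / ((m+1 : ℕ) : ℝ)^2 ≤ 1/(m:ℝ) - 1/((m:ℝ)+1) := by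
          push_cast
          rw [div_sub_div _ _ (by positivity) (by positivity),
            div_le_div_iff₀ (by positivity) (by positivity)]
          nlinarith
        push_cast at *
        linarith
    have h := key M (by omega)
    have : (0:ℝ) < (M:ℝ) := by exact_mod_cast (by omega : 0 < M)
    have : 0 ≤ 1/(M:ℝ) := by positivity
    linarith

lemma zr3_le : zr 3 ≤ 29/24 := by
  apply Real.tsum_le_of_sum_range_le (fun n => by positivity)
  intro M
  rcases le_or_gt M 2 with hM | hM
  · calc ∑ i ∈ Finset.range M, 1 / ((i+1 : ℕ) : ℝ)^3
        ≤ ∑ i ∈ Finset.range 2, 1 / ((i+1 : ℕ) : ℝ)^3 :=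
          Finset.sum_le_sum_of_subset_of_nonneg (Finset.range_subset_range.mpr hM)
            (fun i _ _ => by positivity)
      _ ≤ 29/24 := by norm_num [Finset.sum_range_succ]
  · have key : ∀ M : ℕ, 2 ≤ M → ∑ i ∈ Finset.range M, 1 / ((i+1 : ℕ) : ℝ)^3
        ≤ 29/24 - 1/(2*(M:ℝ)*((M:ℝ)+1)) := by
      intro M hM
      induction M, hM using Nat.le_induction with
      | base => norm_num [Finset.sum_range_succ]
      | succ m hm ih =>
        rw [Finset.sum_range_succ]
        have hm' : (2:ℝ) ≤ (m:ℝ) := by exact_mod_cast hm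
        have step : 1 / ((m+1 : ℕ) : ℝ)^3
            ≤ 1/(2*(m:ℝ)*((m:ℝ)+1)) - 1/(2*((m:ℝ)+1)*((m:ℝ)+2)) := by
          push_cast
          rw [div_sub_div _ _ (by positivity) (by positivity),
            div_le_div_iff₀ (by positivity) (by positivity)]
          nlinarith
        push_cast at *
        have hrw : ((m:ℝ)+1+1) = ((m:ℝ)+2) := by ring
        rw [hrw]
        linarith
    have h := key M (by omega)
    have : (0:ℝ) < (M:ℝ) := by exact_mod_cast (by omega : 0 < M)
    have : 0 ≤ 1/(2*(M:ℝ)*((M:ℝ)+1)) := by positivity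
    linarith

lemma zr6_ge : 65/64 ≤ zr 6 := by
  have h : ∑ i ∈ Finset.range 2, 1 / ((i+1 : ℕ) : ℝ)^6 ≤ zr 6 :=
    (summable_zr (by norm_num)).sum_le_tsum (Finset.range 2) (fun n _ => by positivity)
  calc (65/64 : ℝ) = ∑ i ∈ Finset.range 2, 1 / ((i+1 : ℕ) : ℝ)^6 := by
        norm_num [Finset.sum_range_succ]
    _ ≤ zr 6 := h

lemma zr_quot_lt : zr 2 * zr 3 / zr 6 < 2 := by
  have h6 : (0:ℝ) < zr 6 := lt_of_lt_of_le (by norm_num) zr6_ge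
  have h23 : zr 2 * zr 3 ≤ (167/100) * (29/24) :=
    mul_le_mul zr2_le zr3_le (zr_nonneg 3) (by norm_num)
  calc zr 2 * zr 3 / zr 6 ≤ ((167/100) * (29/24)) / (65/64) :=
        div_le_div₀ (by norm_num) h23 (by norm_num) zr6_ge
    _ < 2 := by norm_num



noncomputable def Tconst : ℝ := ∑' n, cc n * Real.log n

lemma Aconst_nonneg : 0 ≤ Aconst := tsum_nonneg cc_nonneg
lemma Tconst_nonneg : 0 ≤ Tconst := tsum_nonneg cclog_nonneg

noncomputable def Hsum (m : ℕ) : ℝ := ∑ j ∈ Icc 1 m, 1 / (j : ℝ)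

lemma Hsum_eq (m : ℕ) : Hsum m = ((harmonic m : ℚ) : ℝ) := by
  rw [Hsum, harmonic_eq_sum_Icc]
  push_cast
  simp [one_div]

lemma Hsum_le (m : ℕ) : Hsum m ≤ 1 + Real.log m := by
  rw [Hsum_eq]; exact harmonic_le_one_add_log m

lemma le_Hsum (m : ℕ) : Real.log (m + 1) ≤ Hsum m := by
  rw [Hsum_eq]
  exact_mod_cast log_add_one_le_harmonic m

lemma S_eq (N : ℕ) :
    ∑ k ∈ Icc 1 N, (1 : ℝ) / (Nat.totient k : ℝ)
      = ∑ d ∈ Icc 1 N, cc d * Hsum (N / d) := by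
  have h1 : ∀ k ∈ Icc 1 N, (1 : ℝ) / (Nat.totient k : ℝ)
      = ∑ d ∈ k.divisors, cc d * (1 / ((k / d : ℕ) : ℝ)) := by
    intro k hk
    exact one_div_totient_eq (by simp at hk; omega)
  rw [Finset.sum_congr rfl h1, swap_sum N (fun d m => cc d * (1 / (m : ℝ)))]
  refine Finset.sum_congr rfl fun d _ => ?_
  rw [Hsum, Finset.mul_sum]

lemma partial_le_A (N : ℕ) : ∑ d ∈ Icc 1 N, cc d ≤ Aconst :=
  summable_cc.sum_le_tsum _ (fun i _ => cc_nonneg i)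

lemma partial_log_le_T (N : ℕ) : ∑ d ∈ Icc 1 N, cc d * Real.log d ≤ Tconst :=
  summable_cc_log.sum_le_tsum _ (fun i _ => cclog_nonneg i)

lemma tail_mul_log_le (N : ℕ) (hN : 1 ≤ N) :
    (Aconst - ∑ d ∈ Icc 1 N, cc d) * Real.log N ≤ Tconst := by
  set s : Set ℕ := ↑(Icc 1 N) with hs
  have hsum1 : Summable (fun x : s => cc x) := summable_cc.subtype s
  have hsum1c : Summable (fun x : ↥sᶜ => cc x) := summable_cc.subtype sᶜ
  have hsum2c : Summable (fun x : ↥sᶜ => cc x * Real.log x) := summable_cc_log.subtype sᶜ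
  have hcompl := Summable.tsum_add_tsum_compl (f := cc) (s := s) hsum1 hsum1c
  have hfin : ∑' x : s, cc x = ∑ d ∈ Icc 1 N, cc d := Finset.tsum_subtype' _ cc
  have htail : Aconst - ∑ d ∈ Icc 1 N, cc d = ∑' x : ↥sᶜ, cc x := by
    rw [← hfin, Aconst, ← hcompl]; ring
  rw [htail, ← Summable.tsum_mul_right _ hsum1c]
  have hterm : ∀ x : ↥sᶜ, cc x * Real.log N ≤ cc x * Real.log x := by
    rintro ⟨x, hx⟩
    simp only [Set.mem_compl_iff, hs, Finset.coe_Icc, Set.mem_Icc, not_and_or, not_le] at hx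
    rcases hx with hx | hx
    · interval_cases x
      simp [cc_zero]
    · exact mul_le_mul_of_nonneg_left
        (Real.log_le_log (by exact_mod_cast hN) (by exact_mod_cast hx.le)) (cc_nonneg x)
  calc ∑' x : ↥sᶜ, cc x * Real.log N ≤ ∑' x : ↥sᶜ, cc ↑x * Real.log ↑x :=
        (hsum1c.mul_right _).tsum_le_tsum hterm hsum2c
    _ ≤ Tconst := by
      have hcompl2 := Summable.tsum_add_tsum_compl (f := fun n => cc n * Real.log n) (s := s)
        (summable_cc_log.subtype s) hsum2c
      have hfin2 : ∑' x : s, cc ↑x * Real.log ↑↑x = ∑ d ∈ Icc 1 N, cc d * Real.log d :=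
        Finset.tsum_subtype' _ (fun n => cc n * Real.log n)
      have h0 : 0 ≤ ∑ d ∈ Icc 1 N, cc d * Real.log d :=
        Finset.sum_nonneg fun i _ => cclog_nonneg i
      rw [Tconst, ← hcompl2, hfin2]
      linarith

lemma main_bound (N : ℕ) (hN : 1 ≤ N) :
    |(∑ k ∈ Icc 1 N, (1 : ℝ) / (Nat.totient k : ℝ)) - Aconst * Real.log N|
      ≤ Aconst + 2 * Tconst := by
  rw [S_eq N]
  have hlogN : 0 ≤ Real.log N := Real.log_natCast_nonneg N
  have hP : ∑ d ∈ Icc 1 N, cc d ≤ Aconst := partial_le_A N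
  have hQ : ∑ d ∈ Icc 1 N, cc d * Real.log d ≤ Tconst := partial_log_le_T N
  have hPn : 0 ≤ ∑ d ∈ Icc 1 N, cc d := Finset.sum_nonneg fun i _ => cc_nonneg i
  have hupper : ∑ d ∈ Icc 1 N, cc d * Hsum (N / d)
      ≤ Aconst * Real.log N + Aconst := by
    have h1 : ∑ d ∈ Icc 1 N, cc d * Hsum (N / d)
        ≤ ∑ d ∈ Icc 1 N, cc d * (1 + Real.log N) := by
      refine Finset.sum_le_sum fun d hd => ?_
      refine mul_le_mul_of_nonneg_left ((Hsum_le _).trans ?_) (cc_nonneg d)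
      have hd1 : 1 ≤ d ∧ d ≤ N := by simpa using hd
      have hnd : 1 ≤ N / d := (Nat.one_le_div_iff (by omega)).mpr hd1.2
      have : Real.log (N / d : ℕ) ≤ Real.log N :=
        Real.log_le_log (by exact_mod_cast hnd) (by exact_mod_cast Nat.div_le_self N d)
      linarith
    have h2 : ∑ d ∈ Icc 1 N, cc d * (1 + Real.log N)
        = (∑ d ∈ Icc 1 N, cc d) * (1 + Real.log N) := by
      rw [Finset.sum_mul]
    have h3 : (∑ d ∈ Icc 1 N, cc d) * (1 + Real.log N)
        ≤ Aconst * (1 + Real.log N) :=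
      mul_le_mul_of_nonneg_right hP (by linarith)
    calc ∑ d ∈ Icc 1 N, cc d * Hsum (N / d)
        ≤ (∑ d ∈ Icc 1 N, cc d) * (1 + Real.log N) := by rw [← h2]; exact h1
      _ ≤ Aconst * (1 + Real.log N) := h3
      _ = Aconst * Real.log N + Aconst := by ring
  have hlower : Aconst * Real.log N - 2 * Tconst
      ≤ ∑ d ∈ Icc 1 N, cc d * Hsum (N / d) := by
    have h1 : ∀ d ∈ Icc 1 N, cc d * (Real.log N - Real.log d) ≤ cc d * Hsum (N / d) := by
      intro d hd
      have hd1 : 1 ≤ d ∧ d ≤ N := by simpa using hd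
      refine mul_le_mul_of_nonneg_left ?_ (cc_nonneg d)
      have hdr : (0:ℝ) < d := by exact_mod_cast hd1.1
      have hNr : (0:ℝ) < N := by exact_mod_cast hN
      have hdiv : (N:ℝ) / d ≤ ((N / d : ℕ) : ℝ) + 1 := by
        rw [div_le_iff₀ hdr]
        have hnat : N < d*(N/d) + d := by
          have hdm := Nat.div_add_mod N d
          have hmod : N % d < d := Nat.mod_lt _ (by omega)
          omega
        have hcast : (N:ℝ) < (d:ℝ) * ((N/d : ℕ):ℝ) + (d:ℝ) := by exact_mod_cast hnat
        nlinarith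
      have hlog1 : Real.log N - Real.log d = Real.log ((N:ℝ)/d) :=
        (Real.log_div hNr.ne' hdr.ne').symm
      rw [hlog1]
      refine le_trans (Real.log_le_log (by positivity) hdiv) ?_
      have := le_Hsum (N / d)
      exact_mod_cast this
    have h2 : ∑ d ∈ Icc 1 N, cc d * (Real.log N - Real.log d)
        = (∑ d ∈ Icc 1 N, cc d) * Real.log N - ∑ d ∈ Icc 1 N, cc d * Real.log d := by
      rw [Finset.sum_mul, ← Finset.sum_sub_distrib]
      exact Finset.sum_congr rfl fun d _ => by ring
    have h3 : Aconst * Real.log N - Tconst ≤ (∑ d ∈ Icc 1 N, cc d) * Real.log N := by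
      have := tail_mul_log_le N hN
      nlinarith [this]
    calc Aconst * Real.log N - 2 * Tconst
        ≤ (∑ d ∈ Icc 1 N, cc d) * Real.log N - ∑ d ∈ Icc 1 N, cc d * Real.log d := by
          linarith
      _ = ∑ d ∈ Icc 1 N, cc d * (Real.log N - Real.log d) := h2.symm
      _ ≤ ∑ d ∈ Icc 1 N, cc d * Hsum (N / d) := Finset.sum_le_sum h1
  have hT0 := Tconst_nonneg
  have hA0 := Aconst_nonneg
  rw [abs_le]
  exact ⟨by linarith, by linarith⟩


lemma Aconst_lt_two : Aconst < 2 := by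
  have h2 : riemannZeta 2 = ((zr 2 : ℝ) : ℂ) := by
    rw [show (2:ℂ) = ((2:ℕ):ℂ) by norm_num]; exact zeta_eq_zr (by norm_num)
  have h3 : riemannZeta 3 = ((zr 3 : ℝ) : ℂ) := by
    rw [show (3:ℂ) = ((3:ℕ):ℂ) by norm_num]; exact zeta_eq_zr (by norm_num)
  have h6 : riemannZeta 6 = ((zr 6 : ℝ) : ℂ) := by
    rw [show (6:ℂ) = ((6:ℕ):ℂ) by norm_num]; exact zeta_eq_zr (by norm_num)
  have hz := A_eq_zeta
  rw [h2, h3, h6] at hz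
  have hz2 : ((Aconst : ℝ) : ℂ) = ((zr 2 * zr 3 / zr 6 : ℝ) : ℂ) := by
    rw [hz]; push_cast; ring
  have hA : Aconst = zr 2 * zr 3 / zr 6 := by exact_mod_cast hz2
  rw [hA]; exact zr_quot_lt

theorem sum_one_div_totient_asymptotic :
    ∃ C₁ C₂ : ℝ, (C₁ : ℂ) = riemannZeta 2 * riemannZeta 3 / riemannZeta 6 ∧
      0 < C₂ ∧
      (∀ x : ℝ, 1 ≤ x →
        |(∑ k ∈ Finset.Icc 1 ⌊x⌋₊, (1 : ℝ) / (Nat.totient k)) - C₁ * Real.log x| < C₂) ∧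
      C₁ < 2 ∧
      ∃ X : ℝ, ∀ x : ℝ, X ≤ x →
        (∑ k ∈ Finset.Icc 1 ⌊x⌋₊, (1 : ℝ) / (Nat.totient k)) < 2 * Real.log x := by
  have hA0 := Aconst_nonneg
  have hT0 := Tconst_nonneg
  have hlog2 : (0:ℝ) ≤ Real.log 2 := Real.log_nonneg (by norm_num)
  set C₂ : ℝ := Aconst + 2*Tconst + Aconst * Real.log 2 + 1 with hC2def
  have hC2pos : 0 < C₂ := by
    have : 0 ≤ Aconst * Real.log 2 := mul_nonneg hA0 hlog2
    rw [hC2def]; linarith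
  have hmain : ∀ x : ℝ, 1 ≤ x →
      |(∑ k ∈ Finset.Icc 1 ⌊x⌋₊, (1 : ℝ) / (Nat.totient k)) - Aconst * Real.log x| < C₂ := by
    intro x hx
    set N : ℕ := ⌊x⌋₊ with hN
    have hN1 : 1 ≤ N := Nat.le_floor (by exact_mod_cast hx)
    have hb := main_bound N hN1
    have hx0 : (0:ℝ) < x := by linarith
    have hxN : (N:ℝ) ≤ x := Nat.floor_le hx0.le
    have hxN2 : x < (N:ℝ) + 1 := Nat.lt_floor_add_one x
    have hNr : (1:ℝ) ≤ (N:ℝ) := by exact_mod_cast hN1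
    have hlogmono : Real.log (N:ℝ) ≤ Real.log x := Real.log_le_log (by linarith) hxN
    have hlogup : Real.log x ≤ Real.log (N:ℝ) + Real.log 2 := by
      have hx2N : x ≤ 2 * (N:ℝ) := by linarith
      calc Real.log x ≤ Real.log (2 * (N:ℝ)) := Real.log_le_log hx0 hx2N
        _ = Real.log 2 + Real.log (N:ℝ) := Real.log_mul (by norm_num) (by linarith)
        _ = Real.log (N:ℝ) + Real.log 2 := by ring
    have habs : |Aconst * Real.log (N:ℝ) - Aconst * Real.log x| ≤ Aconst * Real.log 2 := by
      rw [abs_sub_comm,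
        show Aconst * Real.log x - Aconst * Real.log (N:ℝ)
          = Aconst * (Real.log x - Real.log (N:ℝ)) by ring,
        abs_of_nonneg (mul_nonneg hA0 (by linarith))]
      exact mul_le_mul_of_nonneg_left (by linarith) hA0
    calc |(∑ k ∈ Finset.Icc 1 N, (1 : ℝ) / (Nat.totient k)) - Aconst * Real.log x|
        ≤ |(∑ k ∈ Finset.Icc 1 N, (1 : ℝ) / (Nat.totient k)) - Aconst * Real.log (N:ℝ)|
          + |Aconst * Real.log (N:ℝ) - Aconst * Real.log x| := abs_sub_le _ _ _
      _ ≤ (Aconst + 2 * Tconst) + Aconst * Real.log 2 := add_le_add hb habs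
      _ < C₂ := by rw [hC2def]; linarith
  refine ⟨Aconst, C₂, A_eq_zeta, hC2pos, hmain, Aconst_lt_two, ?_⟩
  refine ⟨Real.exp (C₂ / (2 - Aconst)), fun x hx => ?_⟩
  have h2A : 0 < 2 - Aconst := by linarith [Aconst_lt_two]
  have hx1 : (1:ℝ) ≤ x := by
    refine le_trans ?_ hx
    rw [Real.one_le_exp_iff]
    positivity
  have hm := hmain x hx1
  have hlogx : C₂ / (2 - Aconst) ≤ Real.log x := by
    have := Real.log_le_log (Real.exp_pos _) hx
    rwa [Real.log_exp] at this
  have hkey : C₂ ≤ (2 - Aconst) * Real.log x := by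
    rw [div_le_iff₀ h2A] at hlogx
    linarith
  have habs := (abs_lt.mp hm).2
  nlinarith [habs, hkey]
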